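/- Let $v : \mathbb{R} \to [0,\infty)$ be measurable with $\int_{-\infty}^0 v < \infty$ and $\int_{\mathbb{R}} v = \infty$. For $\Delta, \delta > 0$ define the middle-cut operator $\mathcal{C}_{\Delta,\delta} v(x) = v(x)\mathbf{1}_{(-\infty, \gamma^\Delta_v)}(x) + v(x)\mathbf{1}_{[\gamma^{\Delta+\delta}_v, \infty)}(x)$, where $\gamma^q_v = \inf\{a : \int_{-\infty}^a v = q\}$. If $0 < \hat\Delta \leq \Delta$, then $\int_{-\infty}^r \mathcal{C}_{\hat\Delta,\delta} v \leq \int_{-\infty}^r \mathcal{C}_{\Delta,\delta} v$ for all $r \in \mathbb{R}$. -/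

import Mathlib

open MeasureTheory Set
open scoped ENNReal NNReal

/-- Cumulative integral `∫_{-∞}^a w`. -/
noncomputable def cum (w : ℝ → ℝ) (a : ℝ) : ℝ≥0∞ :=
  ∫⁻ x in Set.Iic a, ENNReal.ofReal (w x)

/-- The level `γ_w^q = inf {a : ∫_{-∞}^a w = q}`. -/
noncomputable def gammaLvl (w : ℝ → ℝ) (q : ℝ) : ℝ :=
  sInf {a : ℝ | cum w a = ENNReal.ofReal q}

/-- The middle-cut operator `C_{Δ,δ} w = w·1_{(-∞,γ_w^Δ)} + w·1_{[γ_w^{Δ+δ},∞)}`,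
removing the mass of `w` between cumulative levels `Δ` and `Δ+δ`. -/
noncomputable def midCut (Δ δ : ℝ) (w : ℝ → ℝ) : ℝ → ℝ :=
  fun x => if x < gammaLvl w Δ ∨ gammaLvl w (Δ + δ) ≤ x then w x else 0

section Helpers

variable (μ : Measure ℝ)

/-- left continuity of `a ↦ μ (Iic a)` for atomless `μ`. -/
lemma cumLC (hatom : ∀ x : ℝ, μ {x} = 0) (c : ℝ) (M : ℝ≥0∞)
    (h : ∀ a, a < c → μ (Iic a) ≤ M) : μ (Iic c) ≤ M := by
  have h0 : μ (Iic c) ≤ μ (Iio c) := by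
    rw [← Set.Iio_union_right]
    refine le_trans (measure_union_le _ _) ?_
    simp [hatom c]
  refine h0.trans ?_
  have hU : Iio c = ⋃ n : ℕ, Iic (c - 1/(n+1)) := by
    ext x
    simp only [mem_Iio, mem_iUnion, mem_Iic]
    constructor
    · intro hx
      obtain ⟨n, hn⟩ := exists_nat_one_div_lt (sub_pos.mpr hx)
      exact ⟨n, by linarith⟩
    · rintro ⟨n, hn⟩
      have hpos : (0:ℝ) < 1/((n:ℝ)+1) := by positivity
      linarith
  rw [hU]
  have hd : Directed (· ⊆ ·) fun n : ℕ => Iic (c - 1/((n:ℝ)+1)) := by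
    apply Monotone.directed_le
    intro m n hmn
    apply Iic_subset_Iic.mpr
    have h1 : (1:ℝ)/((n:ℝ)+1) ≤ 1/((m:ℝ)+1) := by
      apply one_div_le_one_div_of_le (by positivity)
      exact_mod_cast Nat.succ_le_succ hmn
    linarith
  rw [hd.measure_iUnion]
  refine iSup_le fun n => h _ ?_
  have hpos : (0:ℝ) < 1/((n:ℝ)+1) := by positivity
  linarith

/-- right continuity (from above, given finiteness). -/
lemma cumRC (c d : ℝ) (q : ℝ≥0∞) (hcd : c < d) (hfin : μ (Iic d) ≠ ⊤)
    (h : ∀ x, c < x → x ≤ d → q ≤ μ (Iic x)) : q ≤ μ (Iic c) := by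
  set s : ℕ → Set ℝ := fun n => Iic (c + (d - c)/((n:ℝ)+1)) with hs
  have hdc : (0:ℝ) < d - c := sub_pos.mpr hcd
  have hanti : Antitone s := by
    intro m n hmn
    apply Iic_subset_Iic.mpr
    have h1 : (d - c)/((n:ℝ)+1) ≤ (d - c)/((m:ℝ)+1) := by
      apply div_le_div_of_nonneg_left hdc.le (by positivity)
      exact_mod_cast Nat.succ_le_succ hmn
    linarith
  have hfin0 : μ (s 0) ≠ ⊤ := by
    have hs0 : s 0 = Iic d := by
      simp only [hs]
      norm_num
    rw [hs0]; exact hfin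
  have hint : ⋂ n, s n = Iic c := by
    ext x
    simp only [hs, mem_iInter, mem_Iic]
    constructor
    · intro hx
      by_contra hcx
      push_neg at hcx
      obtain ⟨n, hn⟩ := exists_nat_one_div_lt (div_pos (sub_pos.mpr hcx) hdc)
      have h2 : (d - c)/((n:ℝ)+1) < x - c := by
        rw [div_lt_div_iff₀ (by positivity) hdc] at hn
        rw [div_lt_iff₀ (by positivity)]
        linarith
      have := hx n
      linarith
    · intro hx n
      have : (0:ℝ) ≤ (d - c)/((n:ℝ)+1) := by positivity
      linarith
  have ht := tendsto_measure_iInter_atTop (μ := μ) (s := s)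
    (fun n => measurableSet_Iic.nullMeasurableSet) hanti ⟨0, hfin0⟩
  rw [hint] at ht
  refine ge_of_tendsto ht (Filter.Eventually.of_forall fun n => ?_)
  apply h
  · have : (0:ℝ) < (d - c)/((n:ℝ)+1) := by positivity
    linarith
  · have h1 : (d - c)/((n:ℝ)+1) ≤ d - c := by
      apply div_le_self hdc.le
      have : (1:ℝ) ≤ (n:ℝ) + 1 := le_add_of_nonneg_left (Nat.cast_nonneg n)
      linarith
    linarith

lemma exists_small (q : ℝ≥0∞) (hq : 0 < q) (hfin0 : μ (Iic 0) ≠ ⊤) :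
    ∃ a : ℝ, μ (Iic a) < q := by
  have hanti : Antitone (fun n : ℕ => Iic (-(n:ℝ))) := by
    intro m n hmn
    apply Iic_subset_Iic.mpr
    have : (m:ℝ) ≤ (n:ℝ) := by exact_mod_cast hmn
    linarith
  have hint : ⋂ n : ℕ, Iic (-(n:ℝ)) = (∅ : Set ℝ) := by
    ext x
    simp only [mem_iInter, mem_Iic, mem_empty_iff_false, iff_false]
    push_neg
    obtain ⟨n, hn⟩ := exists_nat_gt (-x)
    exact ⟨n, by linarith⟩
  have ht := tendsto_measure_iInter_atTop (μ := μ) (s := fun n : ℕ => Iic (-(n:ℝ)))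
    (fun n => measurableSet_Iic.nullMeasurableSet) hanti ⟨0, by simpa using hfin0⟩
  rw [hint] at ht
  simp only [measure_empty] at ht
  obtain ⟨n, hn⟩ := (ht.eventually (Iio_mem_nhds hq)).exists
  exact ⟨-(n:ℝ), hn⟩

lemma bddBelowT (q : ℝ) (hq : 0 < q) (hfin0 : μ (Iic 0) ≠ ⊤) :
    BddBelow {a : ℝ | μ (Iic a) = ENNReal.ofReal q} := by
  obtain ⟨am, ham⟩ := exists_small μ (ENNReal.ofReal q) (ENNReal.ofReal_pos.mpr hq) hfin0
  refine ⟨am, fun a ha => le_of_not_gt fun hlt => ?_⟩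
  have : μ (Iic a) ≤ μ (Iic am) := measure_mono (Iic_subset_Iic.mpr hlt.le)
  rw [ha] at this
  exact absurd (this.trans_lt ham) (lt_irrefl _)

lemma attain (hatom : ∀ x : ℝ, μ {x} = 0) (q : ℝ) (hq : 0 < q) (a₀ : ℝ)
    (h1 : ENNReal.ofReal q ≤ μ (Iic a₀)) (h2 : μ (Iic a₀) ≠ ⊤)
    (hfin0 : μ (Iic 0) ≠ ⊤) :
    ∃ a, μ (Iic a) = ENNReal.ofReal q := by
  obtain ⟨am, ham⟩ := exists_small μ (ENNReal.ofReal q) (ENNReal.ofReal_pos.mpr hq) hfin0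
  set S := {a : ℝ | ENNReal.ofReal q ≤ μ (Iic a)} with hS
  have hne : S.Nonempty := ⟨a₀, h1⟩
  have hbdd : BddBelow S := by
    refine ⟨am, fun a ha => le_of_not_gt fun hlt => ?_⟩
    exact absurd ((ha.trans (measure_mono (Iic_subset_Iic.mpr hlt.le))).trans_lt ham)
      (lt_irrefl _)
  refine ⟨sInf S, le_antisymm ?_ ?_⟩
  · apply cumLC μ hatom
    intro a hac
    by_contra hgt
    push_neg at hgt
    exact absurd (csInf_le hbdd hgt.le) (not_le.mpr hac)
  · have hca : sInf S ≤ a₀ := csInf_le hbdd h1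
    rcases hca.eq_or_lt with heq | hlt
    · rw [heq]; exact h1
    · apply cumRC μ (sInf S) a₀ _ hlt h2
      intro x hcx hxd
      obtain ⟨a, haS, hax⟩ := exists_lt_of_csInf_lt hne hcx
      exact haS.trans (measure_mono (Iic_subset_Iic.mpr hax.le))

lemma gammaSpec (hatom : ∀ x : ℝ, μ {x} = 0) (q : ℝ) (hq : 0 < q) (hfin0 : μ (Iic 0) ≠ ⊤)
    (hE : ∃ a, μ (Iic a) = ENNReal.ofReal q) :
    μ (Iic (sInf {a : ℝ | μ (Iic a) = ENNReal.ofReal q})) = ENNReal.ofReal q := by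
  obtain ⟨t, ht⟩ := hE
  set T := {a : ℝ | μ (Iic a) = ENNReal.ofReal q} with hT
  have hne : T.Nonempty := ⟨t, ht⟩
  have hbdd : BddBelow T := bddBelowT μ q hq hfin0
  have hgt : sInf T ≤ t := csInf_le hbdd ht
  refine le_antisymm ?_ ?_
  · apply cumLC μ hatom
    intro a hag
    by_contra hgt'
    push_neg at hgt'
    have hta : t < a := by
      by_contra hta
      push_neg at hta
      exact absurd ((measure_mono (Iic_subset_Iic.mpr hta)).trans_eq ht) (not_le.mpr hgt')
    linarith [hgt.trans hta.le, hag]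
  · rcases hgt.eq_or_lt with heq | hlt
    · rw [heq]; exact ht.ge
    · apply cumRC μ (sInf T) t _ hlt (by rw [ht]; exact ENNReal.ofReal_ne_top)
      intro x hgx hxt
      obtain ⟨a, haT, hax⟩ := exists_lt_of_csInf_lt hne hgx
      calc ENNReal.ofReal q = μ (Iic a) := haT.symm
        _ ≤ μ (Iic x) := measure_mono (Iic_subset_Iic.mpr hax.le)

lemma cutId (hatom : ∀ x : ℝ, μ {x} = 0) (a b r : ℝ) (hab : a ≤ b) (hA : μ (Iic a) ≠ ⊤) :
    μ (Iic r ∩ (Iio a ∪ Ici b)) + (μ (Iic (min r b)) - μ (Iic a)) = μ (Iic r) := by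
  rcases lt_or_ge r a with h | h
  · have h1 : Iic r ∩ (Iio a ∪ Ici b) = Iic r :=
      inter_eq_left.mpr fun x hx => Or.inl (lt_of_le_of_lt hx h)
    have h2 : min r b = r := min_eq_left (h.le.trans hab)
    have h3 : μ (Iic r) - μ (Iic a) = 0 :=
      tsub_eq_zero_of_le (measure_mono (Iic_subset_Iic.mpr h.le))
    rw [h1, h2, h3, add_zero]
  · have ham : a ≤ min r b := le_min h hab
    have hsplit : μ (Iic r ∩ (Iio a ∪ Ici b)) + μ (Iic r ∩ Ico a b) = μ (Iic r) := by
      have hmeas : MeasurableSet (Iio a ∪ Ici b) := measurableSet_Iio.union measurableSet_Ici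
      have hdiff : Iic r \ (Iio a ∪ Ici b) = Iic r ∩ Ico a b := by
        ext x
        simp only [mem_diff, mem_inter_iff, mem_Iic, mem_union, mem_Iio, mem_Ici, mem_Ico,
          not_or, not_lt, not_le]
      rw [← hdiff]
      exact measure_inter_add_diff _ hmeas
    have hIoo : μ (Ioo a (min r b)) = μ (Icc a (min r b)) := by
      refine le_antisymm (measure_mono Ioo_subset_Icc_self) ?_
      calc μ (Icc a (min r b)) ≤ μ ({a} ∪ ({min r b} ∪ Ioo a (min r b))) := by
            apply measure_mono
            intro x hx
            rcases hx.1.eq_or_lt with heq | h1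
            · exact Or.inl heq.symm
            rcases hx.2.eq_or_lt with heq2 | h2
            · exact Or.inr (Or.inl heq2)
            exact Or.inr (Or.inr ⟨h1, h2⟩)
        _ ≤ μ {a} + (μ {min r b} + μ (Ioo a (min r b))) :=
            le_trans (measure_union_le _ _) (by gcongr; exact measure_union_le _ _)
        _ = μ (Ioo a (min r b)) := by rw [hatom, hatom, zero_add, zero_add]
    have hD : μ (Iic r ∩ Ico a b) = μ (Ioc a (min r b)) := by
      have hsub1 : Ioo a (min r b) ⊆ Iic r ∩ Ico a b := by
        intro x hx
        exact ⟨(hx.2.trans_le (min_le_left _ _)).le, hx.1.le, hx.2.trans_le (min_le_right _ _)⟩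
      have hsub2 : Iic r ∩ Ico a b ⊆ Icc a (min r b) := by
        intro x hx
        exact ⟨hx.2.1, le_min hx.1 hx.2.2.le⟩
      have e1 : μ (Iic r ∩ Ico a b) = μ (Ioo a (min r b)) :=
        le_antisymm (hIoo ▸ measure_mono hsub2) (measure_mono hsub1)
      have e2 : μ (Ioc a (min r b)) = μ (Ioo a (min r b)) :=
        le_antisymm (hIoo ▸ measure_mono Ioc_subset_Icc_self) (measure_mono Ioo_subset_Ioc_self)
      rw [e1, ← e2]
    have hcc : μ (Iic (min r b)) = μ (Iic a) + μ (Iic r ∩ Ico a b) := by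
      rw [hD, ← measure_union (by exact Iic_disjoint_Ioc le_rfl) measurableSet_Ioc,
        Iic_union_Ioc_eq_Iic ham]
    have hkey : μ (Iic (min r b)) - μ (Iic a) = μ (Iic r ∩ Ico a b) := by
      rw [hcc, ENNReal.add_sub_cancel_left hA]
    rw [hkey]
    exact hsplit

lemma cmpD (a b a' b' : ℝ) (hAA' : μ (Iic a) ≤ μ (Iic a')) (hA' : μ (Iic a') ≠ ⊤)
    (hbud : μ (Iic b') ≤ μ (Iic a') + (μ (Iic b) - μ (Iic a))) (r : ℝ) :
    μ (Iic (min r b')) - μ (Iic a') ≤ μ (Iic (min r b)) - μ (Iic a) := by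
  rcases le_total b' b with h | h
  · exact tsub_le_tsub (measure_mono (Iic_subset_Iic.mpr (min_le_min le_rfl h))) hAA'
  · rcases le_total r b with hr | hr
    · rw [min_eq_left hr, min_eq_left (hr.trans h)]
      exact tsub_le_tsub le_rfl hAA'
    · calc μ (Iic (min r b')) - μ (Iic a')
          ≤ μ (Iic b') - μ (Iic a') :=
            tsub_le_tsub (measure_mono (Iic_subset_Iic.mpr (min_le_right _ _))) le_rfl
        _ ≤ (μ (Iic a') + (μ (Iic b) - μ (Iic a))) - μ (Iic a') := tsub_le_tsub hbud le_rfl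
        _ = μ (Iic b) - μ (Iic a) := ENNReal.add_sub_cancel_left hA'
        _ = μ (Iic (min r b)) - μ (Iic a) := by rw [min_eq_right hr]

lemma master (hatom : ∀ x : ℝ, μ {x} = 0) (a b a' b' : ℝ) (hab : a ≤ b) (hab' : a' ≤ b')
    (hA : μ (Iic a) ≠ ⊤) (hA' : μ (Iic a') ≠ ⊤) (hb : μ (Iic b) ≠ ⊤)
    (hAA' : μ (Iic a) ≤ μ (Iic a'))
    (hbud : μ (Iic b') ≤ μ (Iic a') + (μ (Iic b) - μ (Iic a))) (r : ℝ) :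
    μ (Iic r ∩ (Iio a ∪ Ici b)) ≤ μ (Iic r ∩ (Iio a' ∪ Ici b')) := by
  have e1 := cutId μ hatom a b r hab hA
  have e2 := cutId μ hatom a' b' r hab' hA'
  have hcmp := cmpD μ a b a' b' hAA' hA' hbud r
  have hfin : μ (Iic (min r b)) - μ (Iic a) ≠ ⊤ :=
    ne_top_of_le_ne_top hb (tsub_le_self.trans (measure_mono (Iic_subset_Iic.mpr (min_le_right _ _))))
  have hle : μ (Iic r ∩ (Iio a ∪ Ici b)) + (μ (Iic (min r b)) - μ (Iic a))
      ≤ μ (Iic r ∩ (Iio a' ∪ Ici b')) + (μ (Iic (min r b)) - μ (Iic a)) := by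
    rw [e1, ← e2]
    exact add_le_add_right hcmp _
  exact (ENNReal.add_le_add_iff_right hfin).mp hle

lemma cum_cut (v : ℝ → ℝ) (a b r : ℝ) :
    cum (fun x => if x < a ∨ b ≤ x then v x else 0) r
      = (volume.withDensity fun x => ENNReal.ofReal (v x)) (Iic r ∩ (Iio a ∪ Ici b)) := by
  have hK : MeasurableSet (Iio a ∪ Ici b) := measurableSet_Iio.union measurableSet_Ici
  rw [withDensity_apply _ (measurableSet_Iic.inter hK)]
  unfold cum
  have hfun : ∀ x : ℝ, ENNReal.ofReal (if x < a ∨ b ≤ x then v x else 0)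
      = (Iio a ∪ Ici b).indicator (fun y => ENNReal.ofReal (v y)) x := by
    intro x
    by_cases h : x < a ∨ b ≤ x <;>
      simp [Set.indicator_apply, Set.mem_union, Set.mem_Iio, Set.mem_Ici, h]
  rw [lintegral_congr hfun, lintegral_indicator hK, Measure.restrict_restrict hK, inter_comm]

end Helpers

/-- Removing mass at a lower cumulative level gives a smaller function in the
left-integral ordering: if `0 < Δ̂ ≤ Δ` then
`∫_{-∞}^r C_{Δ̂,δ} v ≤ ∫_{-∞}^r C_{Δ,δ} v` for all `r`. -/
theorem stmt_3 (v : ℝ → ℝ) (hv_meas : Measurable v) (hv_nonneg : ∀ x, 0 ≤ v x)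
    (hv_left : cum v 0 < ⊤) (hv_total : ∫⁻ x, ENNReal.ofReal (v x) = ⊤)
    (Δ δ Δhat : ℝ) (hΔ : 0 < Δ) (hδ : 0 < δ)
    (hΔhat_pos : 0 < Δhat) (hΔhat_le : Δhat ≤ Δ) :
    ∀ r : ℝ, cum (midCut Δhat δ v) r ≤ cum (midCut Δ δ v) r := by
  intro r
  set μ : Measure ℝ := volume.withDensity fun x => ENNReal.ofReal (v x) with hμ
  have hatom : ∀ x : ℝ, μ {x} = 0 := fun x =>
    withDensity_absolutelyContinuous volume _ Real.volume_singleton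
  have hcum : ∀ a : ℝ, cum v a = μ (Iic a) := fun a =>
    (withDensity_apply _ measurableSet_Iic).symm
  have hfin0 : μ (Iic 0) ≠ ⊤ := by rw [← hcum]; exact hv_left.ne
  have hmono : ∀ {x y : ℝ}, x ≤ y → μ (Iic x) ≤ μ (Iic y) :=
    fun h => measure_mono (Iic_subset_Iic.mpr h)
  have hgl : ∀ q : ℝ, gammaLvl v q = sInf {a : ℝ | μ (Iic a) = ENNReal.ofReal q} := by
    intro q
    unfold gammaLvl
    congr 1
    ext a
    rw [mem_setOf_eq, mem_setOf_eq, hcum]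
  have hglEmpty : ∀ q : ℝ, (¬ ∃ a, μ (Iic a) = ENNReal.ofReal q) → gammaLvl v q = 0 := by
    intro q hne
    rw [hgl]
    have : {a : ℝ | μ (Iic a) = ENNReal.ofReal q} = ∅ :=
      eq_empty_iff_forall_notMem.mpr fun a ha => hne ⟨a, ha⟩
    rw [this, Real.sInf_empty]
  have horder : ∀ q q' : ℝ, q < q' → 0 < q' →
      μ (Iic (gammaLvl v q)) = ENNReal.ofReal q →
      μ (Iic (gammaLvl v q')) = ENNReal.ofReal q' →
      gammaLvl v q ≤ gammaLvl v q' := by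
    intro q q' hqq' hq' hgq hgq'
    by_contra hlt
    push_neg at hlt
    have h1 : μ (Iic (gammaLvl v q')) ≤ μ (Iic (gammaLvl v q)) := hmono hlt.le
    rw [hgq, hgq'] at h1
    exact absurd h1 (not_le.mpr ((ENNReal.ofReal_lt_ofReal_iff hq').mpr hqq'))
  have hdelta : ENNReal.ofReal (Δhat + δ) - ENNReal.ofReal Δhat = ENNReal.ofReal δ := by
    rw [← ENNReal.ofReal_sub _ hΔhat_pos.le, add_sub_cancel_left]
  by_cases hE2 : ∃ a, μ (Iic a) = ENNReal.ofReal (Δ + δ)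
  · -- all levels attained
    obtain ⟨a2, ha2⟩ := hE2
    have hane : μ (Iic a2) ≠ ⊤ := by rw [ha2]; exact ENNReal.ofReal_ne_top
    have hEq : ∀ q : ℝ, 0 < q → q ≤ Δ + δ → ∃ a, μ (Iic a) = ENNReal.ofReal q := by
      intro q hq hqle
      exact attain μ hatom q hq a2 (by rw [ha2]; exact ENNReal.ofReal_le_ofReal hqle) hane hfin0
    have g1 : μ (Iic (gammaLvl v Δ)) = ENNReal.ofReal Δ := by
      rw [hgl]; exact gammaSpec μ hatom Δ hΔ hfin0 (hEq Δ hΔ (by linarith))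
    have g2 : μ (Iic (gammaLvl v (Δ + δ))) = ENNReal.ofReal (Δ + δ) := by
      rw [hgl]; exact gammaSpec μ hatom (Δ + δ) (by linarith) hfin0 (hEq (Δ + δ) (by linarith) le_rfl)
    have gh1 : μ (Iic (gammaLvl v Δhat)) = ENNReal.ofReal Δhat := by
      rw [hgl]; exact gammaSpec μ hatom Δhat hΔhat_pos hfin0 (hEq Δhat hΔhat_pos (by linarith))
    have gh2 : μ (Iic (gammaLvl v (Δhat + δ))) = ENNReal.ofReal (Δhat + δ) := by
      rw [hgl]; exact gammaSpec μ hatom (Δhat + δ) (by linarith) hfin0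
        (hEq (Δhat + δ) (by linarith) (by linarith))
    have hab : gammaLvl v Δhat ≤ gammaLvl v (Δhat + δ) :=
      horder Δhat (Δhat + δ) (by linarith) (by linarith) gh1 gh2
    have hab' : gammaLvl v Δ ≤ gammaLvl v (Δ + δ) :=
      horder Δ (Δ + δ) (by linarith) (by linarith) g1 g2
    unfold midCut
    rw [cum_cut, cum_cut]
    apply master μ hatom _ _ _ _ hab hab'
      (by rw [gh1]; exact ENNReal.ofReal_ne_top)
      (by rw [g1]; exact ENNReal.ofReal_ne_top)
      (by rw [gh2]; exact ENNReal.ofReal_ne_top)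
      (by rw [gh1, g1]; exact ENNReal.ofReal_le_ofReal hΔhat_le)
    rw [g2, g1, gh2, gh1, hdelta, ← ENNReal.ofReal_add hΔ.le hδ.le]
  · -- Δ+δ not attained
    have hγ2 : gammaLvl v (Δ + δ) = 0 := hglEmpty _ hE2
    have hcum0lt : μ (Iic 0) < ENNReal.ofReal (Δ + δ) := by
      by_contra hge
      push_neg at hge
      exact hE2 (attain μ hatom (Δ + δ) (by linarith) 0 hge hfin0 hfin0)
    rcases lt_or_ge (gammaLvl v Δ) 0 with hγ1 | hγ1
    · -- Δ is attained (otherwise γ₁ = 0)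
      have hEΔ : ∃ a, μ (Iic a) = ENNReal.ofReal Δ := by
        by_contra hne
        rw [hglEmpty Δ hne] at hγ1
        exact lt_irrefl _ hγ1
      have g1 : μ (Iic (gammaLvl v Δ)) = ENNReal.ofReal Δ := by
        rw [hgl]; exact gammaSpec μ hatom Δ hΔ hfin0 hEΔ
      obtain ⟨aΔ, haΔ⟩ := hEΔ
      have haΔne : μ (Iic aΔ) ≠ ⊤ := by rw [haΔ]; exact ENNReal.ofReal_ne_top
      have hEh : ∃ a, μ (Iic a) = ENNReal.ofReal Δhat :=
        attain μ hatom Δhat hΔhat_pos aΔ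
          (by rw [haΔ]; exact ENNReal.ofReal_le_ofReal hΔhat_le) haΔne hfin0
      have gh1 : μ (Iic (gammaLvl v Δhat)) = ENNReal.ofReal Δhat := by
        rw [hgl]; exact gammaSpec μ hatom Δhat hΔhat_pos hfin0 hEh
      by_cases hEhδ : ∃ a, μ (Iic a) = ENNReal.ofReal (Δhat + δ)
      · have gh2 : μ (Iic (gammaLvl v (Δhat + δ))) = ENNReal.ofReal (Δhat + δ) := by
          rw [hgl]; exact gammaSpec μ hatom (Δhat + δ) (by linarith) hfin0 hEhδ
        have hab : gammaLvl v Δhat ≤ gammaLvl v (Δhat + δ) :=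
          horder Δhat (Δhat + δ) (by linarith) (by linarith) gh1 gh2
        unfold midCut
        rw [hγ2, cum_cut, cum_cut]
        apply master μ hatom _ _ _ _ hab hγ1.le
          (by rw [gh1]; exact ENNReal.ofReal_ne_top)
          (by rw [g1]; exact ENNReal.ofReal_ne_top)
          (by rw [gh2]; exact ENNReal.ofReal_ne_top)
          (by rw [gh1, g1]; exact ENNReal.ofReal_le_ofReal hΔhat_le)
        rw [g1, gh2, gh1, hdelta, ← ENNReal.ofReal_add hΔ.le hδ.le]
        exact hcum0lt.le
      · have hγh2 : gammaLvl v (Δhat + δ) = 0 := hglEmpty _ hEhδ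
        have hγh1le : gammaLvl v Δhat ≤ 0 := by
          by_contra hpos
          push_neg at hpos
          have h1 : μ (Iic 0) ≤ ENNReal.ofReal Δhat := by
            calc μ (Iic 0) ≤ μ (Iic (gammaLvl v Δhat)) := hmono hpos.le
              _ = _ := gh1
          have h2 : ENNReal.ofReal Δhat ≤ μ (Iic 0) := by
            calc ENNReal.ofReal Δhat ≤ ENNReal.ofReal Δ := ENNReal.ofReal_le_ofReal hΔhat_le
              _ = μ (Iic (gammaLvl v Δ)) := g1.symm
              _ ≤ μ (Iic 0) := hmono hγ1.le
          have h0mem : μ (Iic 0) = ENNReal.ofReal Δhat := le_antisymm h1 h2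
          have hle0 : gammaLvl v Δhat ≤ 0 := by
            rw [hgl]
            exact csInf_le (bddBelowT μ Δhat hΔhat_pos hfin0) h0mem
          linarith
        unfold midCut
        rw [hγ2, hγh2, cum_cut, cum_cut]
        apply master μ hatom _ _ _ _ hγh1le hγ1.le
          (by rw [gh1]; exact ENNReal.ofReal_ne_top)
          (by rw [g1]; exact ENNReal.ofReal_ne_top)
          hfin0
          (by rw [gh1, g1]; exact ENNReal.ofReal_le_ofReal hΔhat_le)
        rw [g1, gh1]
        calc μ (Iic 0) ≤ μ (Iic 0) - ENNReal.ofReal Δhat + ENNReal.ofReal Δhat := le_tsub_add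
          _ = ENNReal.ofReal Δhat + (μ (Iic 0) - ENNReal.ofReal Δhat) := add_comm _ _
          _ ≤ ENNReal.ofReal Δ + (μ (Iic 0) - ENNReal.ofReal Δhat) :=
            add_le_add_left (ENNReal.ofReal_le_ofReal hΔhat_le) _
    · -- γ₁ ≥ 0 : the Δ-cut removes nothing
      have hfull : ∀ x, midCut Δ δ v x = v x := by
        intro x
        simp only [midCut, hγ2]
        rcases lt_or_ge x 0 with h | h
        · rw [if_pos (Or.inl (lt_of_lt_of_le h hγ1))]
        · rw [if_pos (Or.inr h)]
      have hRHS : cum (midCut Δ δ v) r = cum v r := by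
        unfold cum
        exact lintegral_congr fun x => by rw [hfull x]
      have hLHS : cum (midCut Δhat δ v) r ≤ cum v r := by
        unfold cum
        apply lintegral_mono
        intro x
        apply ENNReal.ofReal_le_ofReal
        simp only [midCut]
        split
        · exact le_rfl
        · exact hv_nonneg x
      rw [hRHS]
      exact hLHS
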